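/- Define z(σ, φ) = √(2/3)·(e^{iσ}cos φ, cos(φ+2π/3), cos(φ+4π/3)). Suppose φ, ψ ∈ (-π/2, π/2) with φ, ψ ∉ {-π/6, π/6}, and cos φ·cos ψ + 3·sin φ·sin ψ ≠ 0. Then |⟨z(σ,φ), z(τ,ψ)⟩|² = 1/4 if and only if 1 - cos(σ - τ) = 9·(1 + 2cos(2(φ-ψ)))·sec φ·sec ψ / (16·(cos φ cos ψ + 3 sin φ sin ψ)). -/

import Mathlib

open Real

/-- The vector `z(σ,φ)` parametrizing the pinched torus over the incircle. -/
noncomputable def zVec (σ φ : ℝ) : Fin 3 → ℂ :=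
  ![Real.sqrt (2/3) * Complex.exp (σ * Complex.I) * Real.cos φ,
    Real.sqrt (2/3) * Real.cos (φ + 2 * π / 3),
    Real.sqrt (2/3) * Real.cos (φ + 4 * π / 3)]

theorem stmt_14 (σ τ φ ψ : ℝ)
    (hφ : φ ∈ Set.Ioo (-(π/2)) (π/2)) (hψ : ψ ∈ Set.Ioo (-(π/2)) (π/2))
    (hφ6 : φ ≠ -(π/6) ∧ φ ≠ π/6) (hψ6 : ψ ≠ -(π/6) ∧ ψ ≠ π/6)
    (hden : cos φ * cos ψ + 3 * sin φ * sin ψ ≠ 0) :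
    ‖∑ i : Fin 3, (starRingEnd ℂ) (zVec σ φ i) * zVec τ ψ i‖ ^ 2 = 1 / 4 ↔
      1 - cos (σ - τ) =
        9 * (1 + 2 * cos (2 * (φ - ψ))) * (1 / cos φ) * (1 / cos ψ) /
          (16 * (cos φ * cos ψ + 3 * sin φ * sin ψ)) := by
  have hcφ : 0 < Real.cos φ := Real.cos_pos_of_mem_Ioo hφ
  have hcψ : 0 < Real.cos ψ := Real.cos_pos_of_mem_Ioo hψ
  have h3 : Real.sqrt 3 ^ 2 = 3 := Real.sq_sqrt (by norm_num)
  have h23 : Real.sqrt (2/3) ^ 2 = 2/3 := Real.sq_sqrt (by norm_num)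
  set c := Real.cos φ * Real.cos ψ with hc
  set D := Real.cos φ * Real.cos ψ + 3 * Real.sin φ * Real.sin ψ with hD
  -- step A : the sum of the two real products
  have c23 : Real.cos (2*π/3) = -(1/2) := by
    rw [show (2*π/3 : ℝ) = π - π/3 by ring, Real.cos_pi_sub, Real.cos_pi_div_three]
  have s23 : Real.sin (2*π/3) = Real.sqrt 3 / 2 := by
    rw [show (2*π/3 : ℝ) = π - π/3 by ring, Real.sin_pi_sub, Real.sin_pi_div_three]
  have c43 : Real.cos (4*π/3) = -(1/2) := by
    rw [show (4*π/3 : ℝ) = π + π/3 by ring, Real.cos_add, Real.cos_pi, Real.sin_pi,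
      Real.cos_pi_div_three]; ring
  have s43 : Real.sin (4*π/3) = -(Real.sqrt 3 / 2) := by
    rw [show (4*π/3 : ℝ) = π + π/3 by ring, Real.sin_add, Real.cos_pi, Real.sin_pi,
      Real.sin_pi_div_three]; ring
  have hA : Real.cos (φ + 2*π/3) * Real.cos (ψ + 2*π/3)
      + Real.cos (φ + 4*π/3) * Real.cos (ψ + 4*π/3) = D / 2 := by
    rw [Real.cos_add, Real.cos_add, Real.cos_add, Real.cos_add, c23, s23, c43, s43, hD]
    linear_combination (Real.sin φ * Real.sin ψ / 2) * h3
  -- step B : the inner product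
  have hS : (∑ i : Fin 3, (starRingEnd ℂ) (zVec σ φ i) * zVec τ ψ i)
      = Complex.ofReal (2/3 * (Real.cos (τ - σ) * c + D/2))
        + Complex.ofReal (2/3 * (Real.sin (τ - σ) * c)) * Complex.I := by
    have h23c : ((Real.sqrt (2/3) : ℂ))^2 = 2/3 := by
      rw [← Complex.ofReal_pow, h23]; norm_num
    have e1 : Complex.exp (↑σ * Complex.I)
        = (Real.cos σ : ℂ) + (Real.sin σ : ℂ) * Complex.I := by
      rw [Complex.exp_mul_I, ← Complex.ofReal_cos, ← Complex.ofReal_sin]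
    have e2 : Complex.exp (↑τ * Complex.I)
        = (Real.cos τ : ℂ) + (Real.sin τ : ℂ) * Complex.I := by
      rw [Complex.exp_mul_I, ← Complex.ofReal_cos, ← Complex.ofReal_sin]
    rw [← hA]
    simp only [zVec, Fin.sum_univ_three, Matrix.cons_val_zero, Matrix.cons_val_one,
      Matrix.head_cons, Matrix.cons_val_two, Matrix.tail_cons, e1, e2, map_mul, map_add,
      Complex.conj_ofReal, Complex.conj_I, Real.cos_sub, Real.sin_sub]
    linear_combination (norm := (push_cast [hc]; ring1)) (((Real.cos σ : ℂ) - (Real.sin σ : ℂ) * Complex.I) *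
        ((Real.cos τ : ℂ) + (Real.sin τ : ℂ) * Complex.I) * (Real.cos φ : ℂ) * (Real.cos ψ : ℂ)
        + (Real.cos (φ + 2*π/3) : ℂ) * (Real.cos (ψ + 2*π/3) : ℂ)
        + (Real.cos (φ + 4*π/3) : ℂ) * (Real.cos (ψ + 4*π/3) : ℂ)) * h23c
      + (-(2/3) * (Real.sin σ : ℂ) * (Real.sin τ : ℂ) * (Real.cos φ : ℂ) * (Real.cos ψ : ℂ)) *
        Complex.I_sq
  rw [hS, Complex.sq_norm, Complex.normSq_add_mul_I]
  have hθ2 : Real.sin (τ - σ) ^ 2 = 1 - Real.cos (τ - σ) ^ 2 := Real.sin_sq (τ - σ)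
  have hστ : Real.cos (σ - τ) = Real.cos (τ - σ) := by
    rw [show σ - τ = -(τ - σ) by ring, Real.cos_neg]
  have hE : Real.cos (φ - ψ) = (2*c + D)/3 := by rw [Real.cos_sub, hc, hD]; ring
  have h2δ : Real.cos (2*(φ - ψ)) = 2 * ((2*c+D)/3)^2 - 1 := by
    rw [Real.cos_two_mul, hE]
  rw [hστ, h2δ]
  have hcφ' : Real.cos φ ≠ 0 := ne_of_gt hcφ
  have hcψ' : Real.cos ψ ≠ 0 := ne_of_gt hcψ
  constructor
  · intro h
    field_simp
    linear_combination (-324 : ℝ) * h + 144 * c^2 * hθ2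
  · intro h
    field_simp at h
    linear_combination (-1/324 : ℝ) * h + (4/9) * c^2 * hθ2
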